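/- Let U = {u_{n,i} : n ∈ ℕ, i ∈ {0,1}} be a disjoint union of pairs U_n = {u_{n,0}, u_{n,1}}, and let G be the group of permutations of U fixing each U_n setwise. Then for every function f : U → U ∪ {*} (with * ∉ U) that is supported by ⋃_{k<N} U_k (i.e., every g ∈ G fixing ⋃_{k<N} U_k pointwise satisfies g∘f = f∘g as graphs, meaning (x,y) ∈ f ⇒ (gx, gy) ∈ f), f is not surjective onto U ∪ {*}. -/

import Mathlib

/-- Russell's pairs of socks: for the set U = ℕ × {0,1} of atoms with the group
of permutations fixing each pair {(n,0),(n,1)} setwise, no function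
f : U → U ∪ {*} supported by finitely many pairs is surjective. -/
theorem stmt16 (f : ℕ × Fin 2 → Option (ℕ × Fin 2)) (N : ℕ)
    (hsupp : ∀ g : Equiv.Perm (ℕ × Fin 2), (∀ p : ℕ × Fin 2, (g p).1 = p.1) →
      (∀ p : ℕ × Fin 2, p.1 < N → g p = p) →
      ∀ x : ℕ × Fin 2, f (g x) = Option.map (⇑g) (f x)) :
    ¬ Function.Surjective f := by
  intro hsurj
  set σ : ℕ → Equiv.Perm (ℕ × Fin 2) := fun m => Equiv.swap (m, 0) (m, 1) with hσ
  have hσ1 : ∀ m p, (σ m p).1 = p.1 := by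
    intro m p
    by_cases h0 : p = (m, (0 : Fin 2))
    · simp [hσ, h0]
    by_cases h1 : p = (m, (1 : Fin 2))
    · simp [hσ, h1]
    · simp [hσ, Equiv.swap_apply_of_ne_of_ne h0 h1]
  have hσfix : ∀ m (p : ℕ × Fin 2), p.1 ≠ m → σ m p = p := by
    intro m p h
    apply Equiv.swap_apply_of_ne_of_ne <;> intro hc <;> apply h <;> rw [hc]
  have key : ∀ m, N ≤ m → ∀ x, f (σ m x) = Option.map (⇑(σ m)) (f x) := by
    intro m hm x
    exact hsupp (σ m) (hσ1 m) (fun p hp => hσfix m p (by omega)) x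
  have lemA : ∀ (x : ℕ × Fin 2) m (i : Fin 2), N ≤ m → f x = some (m, i) → x.1 = m := by
    intro x m i hm hf
    by_contra hne
    have h := key m hm x
    rw [hσfix m x hne, hf] at h
    have h2 : (m, i) = σ m (m, i) := by
      simpa using h
    have : i = (0 : Fin 2) ∨ i = 1 := by omega
    rcases this with rfl | rfl <;> simp [hσ] at h2
  -- every x with high index maps into its own pair
  have highimg : ∀ x : ℕ × Fin 2, N ≤ x.1 → ∃ i : Fin 2, f x = some (x.1, i) := by
    intro x hx
    obtain ⟨x0, hx0⟩ := hsurj (some (x.1, 0))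
    obtain ⟨x1, hx1⟩ := hsurj (some (x.1, 1))
    have h0 : x0.1 = x.1 := lemA x0 x.1 0 hx hx0
    have h1 : x1.1 = x.1 := lemA x1 x.1 1 hx hx1
    have hne : x0 ≠ x1 := by
      intro h; rw [h, hx1] at hx0; simp at hx0
    have h02 : x0.2 ≠ x1.2 := by
      intro h; exact hne (Prod.ext (h0.trans h1.symm) h)
    have hx2 : x.2 = x0.2 ∨ x.2 = x1.2 := by
      have a := x.2.isLt; have b := x0.2.isLt; have c := x1.2.isLt
      have : x0.2.val ≠ x1.2.val := fun h => h02 (Fin.ext h)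
      rcases eq_or_ne x.2.val x0.2.val with he | he
      · exact Or.inl (Fin.ext he)
      · right; apply Fin.ext; omega
    rcases hx2 with h | h
    · obtain rfl : x0 = x := Prod.ext h0 h.symm
      exact ⟨0, hx0⟩
    · obtain rfl : x1 = x := Prod.ext h1 h.symm
      exact ⟨1, hx1⟩
  -- preimages of none and of low socks are low
  have nonelow : ∀ x : ℕ × Fin 2, f x = none → x.1 < N := by
    intro x hx
    by_contra h
    obtain ⟨i, hi⟩ := highimg x (by omega)
    rw [hx] at hi; exact nomatch hi
  have lowlow : ∀ (x : ℕ × Fin 2) k (i : Fin 2), k < N → f x = some (k, i) → x.1 < N := by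
    intro x k i hk hx
    by_contra h
    obtain ⟨j, hj⟩ := highimg x (by omega)
    rw [hx] at hj
    have : k = x.1 := by simpa using congrArg (Option.map Prod.fst) hj
    omega
  -- the finite restriction
  set F : Fin N × Fin 2 → Option (Fin N × Fin 2) :=
    fun p => (f (p.1.val, p.2)).bind
      (fun q => if h : q.1 < N then some (⟨q.1, h⟩, q.2) else none) with hF
  have hFsurj : Function.Surjective F := by
    rintro (_ | ⟨k, i⟩)
    · obtain ⟨x, hx⟩ := hsurj none
      have hxN := nonelow x hx
      refine ⟨(⟨x.1, hxN⟩, x.2), ?_⟩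
      simp [hF, hx]
    · obtain ⟨x, hx⟩ := hsurj (some (k.val, i))
      have hxN := lowlow x k.val i k.isLt hx
      refine ⟨(⟨x.1, hxN⟩, x.2), ?_⟩
      simp [hF, hx, k.isLt]
  have hcard := Fintype.card_le_of_surjective F hFsurj
  simp [Fintype.card_option] at hcard
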